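/- Let x₀ = (1/2, 1/2), write (x̃, ỹ) = (x − 1/2, y − 1/2) and r = (x̃² + ỹ²)^{1/2}. On the punctured plane {(x,y) ∈ ℝ² : r > 0}, the annular-region Gresho–Chan fields u(x,y) = (−2ỹ/r + 5ỹ, 2x̃/r − 5x̃) and p(x,y) = 4 ln(5r) + (25/2) r² − 20 r + 4 satisfy the steady incompressible Euler equations with zero body force: ∂u₁/∂x + ∂u₂/∂y = 0, u₁ ∂u₁/∂x + u₂ ∂u₁/∂y + ∂p/∂x = 0, and u₁ ∂u₂/∂x + u₂ ∂u₂/∂y + ∂p/∂y = 0 at every point with r > 0. -/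

import Mathlib

/-- The annular-region Gresho–Chan fields `u = (−2ỹ/r + 5ỹ, 2x̃/r − 5x̃)`,
`p = 4 ln(5r) + (25/2)r² − 20r + 4`, with `(x̃,ỹ) = (x−1/2, y−1/2)` and
`r = √(x̃² + ỹ²)`, satisfy the steady incompressible Euler equations with zero body
force at every point of the punctured plane `r > 0`. -/
theorem stmt_11 :
    let r : ℝ → ℝ → ℝ := fun x y => Real.sqrt ((x - 1 / 2) ^ 2 + (y - 1 / 2) ^ 2)
    let u₁ : ℝ → ℝ → ℝ := fun x y => -2 * (y - 1 / 2) / r x y + 5 * (y - 1 / 2)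
    let u₂ : ℝ → ℝ → ℝ := fun x y => 2 * (x - 1 / 2) / r x y - 5 * (x - 1 / 2)
    let p : ℝ → ℝ → ℝ := fun x y =>
      4 * Real.log (5 * r x y) + 25 / 2 * (r x y) ^ 2 - 20 * r x y + 4
    ∀ x y : ℝ, 0 < r x y →
      (deriv (fun x' => u₁ x' y) x + deriv (fun y' => u₂ x y') y = 0) ∧
      (u₁ x y * deriv (fun x' => u₁ x' y) x + u₂ x y * deriv (fun y' => u₁ x y') y
        + deriv (fun x' => p x' y) x = 0) ∧
      (u₁ x y * deriv (fun x' => u₂ x' y) x + u₂ x y * deriv (fun y' => u₂ x y') y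
        + deriv (fun y' => p x y') y = 0) := by
  intro r u₁ u₂ p x y hpos
  simp only [r, u₁, u₂, p] at *
  set A := x - 1/2 with hA
  set B := y - 1/2 with hB
  set R := Real.sqrt (A^2 + B^2) with hRdef
  have hS : A^2 + B^2 ≠ 0 := by
    intro h
    rw [hRdef, h, Real.sqrt_zero] at hpos
    exact lt_irrefl 0 hpos
  have hR0 : R ≠ 0 := ne_of_gt hpos
  have hRsq : R^2 = A^2 + B^2 := Real.sq_sqrt (by positivity)
  have hRx : HasDerivAt (fun x' => Real.sqrt ((x' - 1/2)^2 + B^2)) (A / R) x := by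
    have h1 : HasDerivAt (fun x' => (x' - 1/2)^2 + B^2) (2*A) x := by
      exact ((((hasDerivAt_id x).sub_const (1/2)).pow 2).add_const (B^2)).congr_deriv (by simp [hA])
    have h2 := h1.sqrt hS
    convert h2 using 1
    rw [← hRdef]; field_simp
  have hRy : HasDerivAt (fun y' => Real.sqrt (A^2 + (y' - 1/2)^2)) (B / R) y := by
    have h1 : HasDerivAt (fun y' => A^2 + (y' - 1/2)^2) (2*B) y := by
      exact (HasDerivAt.const_add (A^2)
        (((hasDerivAt_id y).sub_const (1/2)).pow 2)).congr_deriv (by simp [hB])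
    have h2 := h1.sqrt hS
    convert h2 using 1
    rw [← hRdef]; field_simp
  -- derivatives of u₁
  have D1x : deriv (fun x' => -2*B / Real.sqrt ((x' - 1/2)^2 + B^2) + 5*B) x
      = (0 * R - (-2*B) * (A/R)) / R^2 :=
    (((hasDerivAt_const x (-2*B)).div hRx hR0).add_const (5*B)).deriv
  have D1y : deriv (fun y' => -2*(y' - 1/2) / Real.sqrt (A^2 + (y' - 1/2)^2)
      + 5*(y' - 1/2)) y
      = (-2 * R - (-2*B) * (B/R)) / R^2 + 5 := by
    have hc : HasDerivAt (fun y' : ℝ => -2*(y' - 1/2)) (-2) y := by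
      exact (((hasDerivAt_id y).sub_const (1/2)).const_mul (-2)).congr_deriv (by norm_num)
    have hd : HasDerivAt (fun y' : ℝ => 5*(y' - 1/2)) 5 y := by
      exact (((hasDerivAt_id y).sub_const (1/2)).const_mul 5).congr_deriv (by norm_num)
    have h := ((hc.div hRy hR0).add hd).deriv
    rw [← hB, ← hRdef] at h
    exact h
  have D2x : deriv (fun x' => 2*(x' - 1/2) / Real.sqrt ((x' - 1/2)^2 + B^2)
      - 5*(x' - 1/2)) x
      = (2 * R - 2*A * (A/R)) / R^2 - 5 := by
    have hc : HasDerivAt (fun x' : ℝ => 2*(x' - 1/2)) 2 x := by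
      exact (((hasDerivAt_id x).sub_const (1/2)).const_mul 2).congr_deriv (by norm_num)
    have hd : HasDerivAt (fun x' : ℝ => 5*(x' - 1/2)) 5 x := by
      exact (((hasDerivAt_id x).sub_const (1/2)).const_mul 5).congr_deriv (by norm_num)
    have h := ((hc.div hRx hR0).sub hd).deriv
    rw [← hA, ← hRdef] at h
    exact h
  have D2y : deriv (fun y' => 2*A / Real.sqrt (A^2 + (y' - 1/2)^2) - 5*A) y
      = (0 * R - 2*A * (B/R)) / R^2 :=
    (((hasDerivAt_const y (2*A)).div hRy hR0).sub_const (5*A)).deriv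
  -- derivatives of p
  have hlogx : HasDerivAt (fun x' => Real.log (5 * Real.sqrt ((x' - 1/2)^2 + B^2)))
      ((5 * (A/R)) / (5 * R)) x :=
    (hRx.const_mul 5).log (by positivity)
  have hlogy : HasDerivAt (fun y' => Real.log (5 * Real.sqrt (A^2 + (y' - 1/2)^2)))
      ((5 * (B/R)) / (5 * R)) y :=
    (hRy.const_mul 5).log (by positivity)
  have DPx : deriv (fun x' => 4 * Real.log (5 * Real.sqrt ((x' - 1/2)^2 + B^2))
      + 25/2 * Real.sqrt ((x' - 1/2)^2 + B^2) ^ 2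
      - 20 * Real.sqrt ((x' - 1/2)^2 + B^2) + 4) x
      = 4 * ((5 * (A/R)) / (5 * R)) + 25/2 * (2 * R^1 * (A/R)) - 20 * (A/R) := by
    have h := ((((hlogx.const_mul 4).add ((hRx.pow 2).const_mul (25/2))).sub
      (hRx.const_mul 20)).add_const 4).deriv
    simp only [Pi.add_apply, Pi.sub_apply, Pi.pow_apply] at h
    rw [← hRdef] at h
    convert h using 2 <;> push_cast <;> ring
  have DPy : deriv (fun y' => 4 * Real.log (5 * Real.sqrt (A^2 + (y' - 1/2)^2))
      + 25/2 * Real.sqrt (A^2 + (y' - 1/2)^2) ^ 2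
      - 20 * Real.sqrt (A^2 + (y' - 1/2)^2) + 4) y
      = 4 * ((5 * (B/R)) / (5 * R)) + 25/2 * (2 * R^1 * (B/R)) - 20 * (B/R) := by
    have h := ((((hlogy.const_mul 4).add ((hRy.pow 2).const_mul (25/2))).sub
      (hRy.const_mul 20)).add_const 4).deriv
    simp only [Pi.add_apply, Pi.sub_apply, Pi.pow_apply] at h
    rw [← hRdef] at h
    convert h using 2 <;> push_cast <;> ring
  rw [D1x, D1y, D2x, D2y, DPx, DPy]
  clear D1x D1y D2x D2y DPx DPy hlogx hlogy hRx hRy hS hpos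
  clear_value A B R
  clear hRdef hA hB r u₁ u₂ p x y
  refine ⟨?_, ?_, ?_⟩
  · field_simp
    ring
  · field_simp
    linarith [hRsq]
  · field_simp
    linarith [hRsq]
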